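/- Let (b_n)_{n≥0} be a sequence of rational numbers with b_0 = 1, and define the polynomials p_n(x) = Σ_{i=0}^n (x)_i · B_{n,i} ∈ ℚ[x], where B_{n,i} are the partial Bell polynomials of the sequence (b_n) and (x)_i is the falling factorial. Then p_{n+1}(x) = x · Σ_{k=0}^n C(n,k) p_k(x) holds for all n ≥ 0 if and only if Σ_{k=0}^n s(n,k) b_k = 1 for all n ≥ 0 (i.e., the b_n are the Bell numbers). In particular, the exponential polynomials Φ_n(x) = Σ_{k=0}^n S(n,k) x^k satisfy the recursion Φ_{n+1}(x) = x · Σ_{k=0}^n C(n,k) Φ_k(x). -/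

import Mathlib

open Finset Polynomial

/-- Exponential generating function of a sequence. -/
noncomputable def egf {R : Type*} [CommRing R] [Algebra ℚ R] (a : ℕ → R) : PowerSeries R :=
  PowerSeries.mk fun n => ((n.factorial : ℚ)⁻¹) • a n

/-- Formal composition of power series (the correct composition when the inner
series `h` has zero constant term, since then `h ^ n` has order at least `n`). -/
noncomputable def psComp {R : Type*} [CommRing R] (g h : PowerSeries R) : PowerSeries R :=
  PowerSeries.mk fun m =>
    ∑ n ∈ Finset.range (m + 1), (PowerSeries.coeff (R := R) n g) * (PowerSeries.coeff (R := R) m (h ^ n))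

/-- Partial Bell polynomials of a sequence `a` (with `a 0 = 1`):
`B_{n,k} = (n!/k!) · [t^n] (f(t) - 1)^k` where `f` is the e.g.f. of `a`. -/
noncomputable def bellPartial {R : Type*} [CommRing R] [Algebra ℚ R] (a : ℕ → R) (n k : ℕ) : R :=
  ((n.factorial : ℚ) / (k.factorial : ℚ)) • (PowerSeries.coeff (R := R) n ((egf a - 1) ^ k))

/-- Stirling numbers of the second kind. -/
def stirling2 : ℕ → ℕ → ℕ
  | 0, 0 => 1
  | 0, _ + 1 => 0
  | _ + 1, 0 => 0
  | n + 1, k + 1 => (k + 1) * stirling2 n (k + 1) + stirling2 n k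

/-- Bell numbers. -/
def bellNum (n : ℕ) : ℕ := ∑ k ∈ Finset.range (n + 1), stirling2 n k

/-- Signed Stirling numbers of the first kind, defined as the coefficients of the
falling factorial `x (x-1) ⋯ (x-n+1) = Σ_k s(n,k) x^k`. -/
noncomputable def stirling1 (n k : ℕ) : ℚ := (descPochhammer ℚ n).coeff k

/-! ### Auxiliary lemmas on Stirling numbers of the second kind -/

lemma stirling2_eq_zero : ∀ {n k : ℕ}, n < k → stirling2 n k = 0
  | 0, _+1, _ => rfl
  | n+1, k+1, h => by
      rw [stirling2, stirling2_eq_zero (by omega), stirling2_eq_zero (by omega)]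
      simp

lemma stirling2_key (n j : ℕ) :
    stirling2 (n+1) (j+1) = ∑ k ∈ range (n+1), n.choose k * stirling2 k j := by
  induction n generalizing j with
  | zero => cases j <;> simp [stirling2]
  | succ n ih =>
    have expand : ∀ k, (n+1).choose (k+1) * stirling2 (k+1) j
        = n.choose k * stirling2 (k+1) j + n.choose (k+1) * stirling2 (k+1) j := by
      intro k; rw [Nat.choose_succ_succ', add_mul]
    rw [Finset.sum_range_succ']
    simp only [expand, Finset.sum_add_distrib]
    have e1 : ∑ k ∈ range (n+1), n.choose (k+1) * stirling2 (k+1) j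
        + (n+1).choose 0 * stirling2 0 j
        = stirling2 (n+1) (j+1) := by
      have h2 : ∑ k ∈ range (n+1+1), n.choose k * stirling2 k j
          = ∑ k ∈ range (n+1), n.choose (k+1) * stirling2 (k+1) j
            + n.choose 0 * stirling2 0 j :=
        Finset.sum_range_succ' (fun k => n.choose k * stirling2 k j) (n+1)
      rw [Finset.sum_range_succ, Nat.choose_succ_self, zero_mul, add_zero] at h2
      simp only [Nat.choose_zero_right] at h2 ⊢
      rw [← h2]
      exact (ih j).symm
    have e2 : ∑ k ∈ range (n+1), n.choose k * stirling2 (k+1) j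
        = j * stirling2 (n+1) (j+1) + stirling2 (n+1) j := by
      cases j with
      | zero =>
        have h0 : ∀ k, stirling2 (k+1) 0 = 0 := fun k => rfl
        simp [h0, stirling2]
      | succ m =>
        have hS : ∀ k, stirling2 (k+1) (m+1) = (m+1) * stirling2 k (m+1) + stirling2 k m :=
          fun k => rfl
        simp only [hS, mul_add, Finset.sum_add_distrib, ← ih]
        congr 1
        rw [ih (m+1), Finset.mul_sum]
        exact Finset.sum_congr rfl fun k _ => by ring
    rw [show stirling2 (n+1+1) (j+1)
        = (j+1) * stirling2 (n+1) (j+1) + stirling2 (n+1) j from rfl]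
    conv_rhs => rw [add_assoc, e1, e2]
    ring

lemma bellNum_rec (n : ℕ) : bellNum (n+1) = ∑ k ∈ range (n+1), n.choose k * bellNum k := by
  have h0 : stirling2 (n+1) 0 = 0 := rfl
  rw [bellNum, Finset.sum_range_succ', h0, add_zero]
  have : ∀ j ∈ range (n+1), stirling2 (n+1) (j+1) = ∑ k ∈ range (n+1), n.choose k * stirling2 k j :=
    fun j _ => stirling2_key n j
  rw [Finset.sum_congr rfl this, Finset.sum_comm]
  refine Finset.sum_congr rfl fun k hk => ?_
  rw [bellNum, ← Finset.mul_sum]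
  congr 1
  rw [Finset.mem_range] at hk
  rw [← Finset.sum_range_add_sum_Ico _ (by omega : k+1 ≤ n+1)]
  have : ∀ j ∈ Finset.Ico (k+1) (n+1), stirling2 k j = 0 := by
    intro j hj; rw [Finset.mem_Ico] at hj; exact stirling2_eq_zero (by omega)
  rw [Finset.sum_congr rfl this]
  simp

/-- The recursion for the exponential polynomials, as raw sums. -/
lemma phi_rec (n : ℕ) :
    (∑ k ∈ range (n+2), Polynomial.C (stirling2 (n+1) k : ℚ) * X^k)
      = X * ∑ k ∈ range (n+1), Polynomial.C ((n.choose k : ℚ))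
          * ∑ j ∈ range (k+1), Polynomial.C (stirling2 k j : ℚ) * X^j := by
  have extend : ∀ k ∈ range (n+1),
      Polynomial.C ((n.choose k : ℚ)) * ∑ j ∈ range (k+1), Polynomial.C (stirling2 k j : ℚ) * X^j
      = ∑ j ∈ range (n+1), Polynomial.C ((n.choose k * stirling2 k j : ℚ)) * X^j := by
    intro k hk
    rw [Finset.mem_range] at hk
    rw [Finset.mul_sum]
    have : ∀ j ∈ range (k+1),
        Polynomial.C ((n.choose k : ℚ)) * (Polynomial.C (stirling2 k j : ℚ) * X^j)
        = Polynomial.C ((n.choose k * stirling2 k j : ℚ)) * X^j := by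
      intro j _; rw [← mul_assoc, ← Polynomial.C_mul]
    rw [Finset.sum_congr rfl this]
    apply Finset.sum_subset (by intro x hx; simp at hx ⊢; omega)
    intro j _ hj
    simp only [Finset.mem_range, not_lt] at hj
    rw [stirling2_eq_zero (by omega)]
    simp
  rw [Finset.sum_congr rfl extend, Finset.sum_comm, Finset.mul_sum]
  rw [Finset.sum_range_succ']
  rw [show stirling2 (n+1) 0 = 0 from rfl]
  simp only [Nat.cast_zero, map_zero, zero_mul, add_zero]
  refine Finset.sum_congr rfl fun j _ => ?_
  rw [stirling2_key]
  push_cast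
  rw [map_sum, pow_succ, ← mul_assoc, ← Finset.sum_mul]
  exact mul_comm ((∑ x ∈ range (n+1), Polynomial.C ((n.choose x : ℚ) * (stirling2 x j : ℚ))) * X^j) X

/-! ### The moment functional -/

noncomputable def Lb (b : ℕ → ℚ) : Polynomial ℚ →ₗ[ℚ] ℚ :=
  Polynomial.lsum (fun n => LinearMap.id.smulRight (b n))

lemma Lb_monomial (b : ℕ → ℚ) (n : ℕ) (c : ℚ) : Lb b (monomial n c) = c * b n := by
  simp [Lb, Polynomial.sum_monomial_index]

lemma Lb_shift (b : ℕ → ℚ)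
    (hrec : ∀ n, b (n+1) = ∑ k ∈ range (n+1), (n.choose k : ℚ) * b k) (q : Polynomial ℚ) :
    Lb b (X * q) = Lb b (q.comp (X + 1)) := by
  induction q using Polynomial.induction_on' with
  | add p q hp hq => rw [mul_add, add_comp, map_add, map_add, hp, hq]
  | monomial n c =>
    rw [X_mul_monomial, Lb_monomial, hrec n, monomial_comp, add_pow]
    have : ∀ k ∈ range (n+1),
        Polynomial.C c * (X ^ k * (1:ℚ[X]) ^ (n - k) * ((n.choose k : ℕ) : ℚ[X]))
        = monomial k (c * n.choose k) := by
      intro k _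
      rw [one_pow, mul_one, ← C_eq_natCast, mul_comm (X^k), ← mul_assoc, ← C_mul,
        C_mul_X_pow_eq_monomial]
    conv_rhs => rw [Finset.mul_sum, Finset.sum_congr rfl this, map_sum]
    rw [Finset.mul_sum]
    refine Finset.sum_congr rfl fun k _ => ?_
    rw [Lb_monomial]
    ring

lemma Lb_descPochhammer (b : ℕ → ℚ) (hb0 : b 0 = 1)
    (hrec : ∀ n, b (n+1) = ∑ k ∈ range (n+1), (n.choose k : ℚ) * b k) (n : ℕ) :
    Lb b (descPochhammer ℚ n) = 1 := by
  induction n with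
  | zero =>
    rw [descPochhammer_zero, show (1 : ℚ[X]) = monomial 0 1 by simp, Lb_monomial, hb0, mul_one]
  | succ n ih =>
    rw [descPochhammer_succ_left, Lb_shift b hrec, comp_assoc]
    simp only [sub_comp, X_comp, one_comp, add_sub_cancel_right, comp_X]
    exact ih

lemma Lb_desc_eq (b : ℕ → ℚ) (n : ℕ) :
    Lb b (descPochhammer ℚ n) = ∑ k ∈ range (n+1), stirling1 n k * b k := by
  have : Lb b (descPochhammer ℚ n) = (descPochhammer ℚ n).sum fun k c => c * b k := by
    simp [Lb]
  rw [this, Polynomial.sum_over_range' _ (fun k => zero_mul (b k)) (n+1)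
    (by rw [descPochhammer_natDegree]; omega)]
  rfl

lemma moments_unique (b c : ℕ → ℚ)
    (hb : ∀ n, ∑ k ∈ range (n+1), stirling1 n k * b k = 1)
    (hc : ∀ n, ∑ k ∈ range (n+1), stirling1 n k * c k = 1) : b = c := by
  funext n
  induction n using Nat.strong_induction_on with
  | _ n ih =>
    have h := (hb n).trans (hc n).symm
    rw [Finset.sum_range_succ, Finset.sum_range_succ] at h
    have hs : stirling1 n n = 1 := by
      have h1 := monic_descPochhammer (R := ℚ) n
      rw [Monic, leadingCoeff, descPochhammer_natDegree] at h1
      exact h1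
    have heq : ∀ k ∈ range n, stirling1 n k * b k = stirling1 n k * c k := by
      intro k hk; rw [Finset.mem_range] at hk; rw [ih k hk]
    rw [Finset.sum_congr rfl heq, hs, one_mul, one_mul] at h
    exact add_left_cancel h

/-! ### Power series lemmas -/

lemma coeff_egf (a : ℕ → ℚ) (n : ℕ) :
    PowerSeries.coeff n (egf a) = ((n.factorial : ℚ))⁻¹ * a n := by
  simp [egf, smul_eq_mul]

lemma egf_deriv (b : ℕ → ℚ)
    (hrec : ∀ n, b (n+1) = ∑ k ∈ range (n+1), (n.choose k : ℚ) * b k) :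
    PowerSeries.derivative ℚ (egf b) = egf b * egf (fun _ => 1) := by
  ext n
  rw [PowerSeries.coeff_derivative, PowerSeries.coeff_mul,
    Finset.Nat.sum_antidiagonal_eq_sum_range_succ
      (fun i j => PowerSeries.coeff i (egf b) * PowerSeries.coeff j (egf (fun _ => 1)))]
  simp only [coeff_egf, mul_one]
  rw [hrec n, Finset.mul_sum, Finset.sum_mul]
  refine Finset.sum_congr rfl fun k hk => ?_
  rw [Finset.mem_range] at hk
  rw [Nat.cast_choose ℚ (by omega : k ≤ n)]
  have h1 : (n.factorial : ℚ) ≠ 0 := Nat.cast_ne_zero.mpr n.factorial_ne_zero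
  have h2 : (k.factorial : ℚ) ≠ 0 := Nat.cast_ne_zero.mpr k.factorial_ne_zero
  have h3 : ((n-k).factorial : ℚ) ≠ 0 := Nat.cast_ne_zero.mpr (n-k).factorial_ne_zero
  have h4 : ((n+1).factorial : ℚ) = (n+1) * n.factorial := by
    rw [Nat.factorial_succ]; push_cast; ring
  field_simp [h4]
  rw [h4]
  ring

lemma egf_pow_deriv (b : ℕ → ℚ)
    (hrec : ∀ n, b (n+1) = ∑ k ∈ range (n+1), (n.choose k : ℚ) * b k) (m : ℕ) :
    PowerSeries.derivative ℚ ((egf b) ^ m)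
      = (m : PowerSeries ℚ) * ((egf b) ^ m * egf (fun _ => 1)) := by
  rw [Derivation.leibniz_pow, egf_deriv b hrec]
  cases m with
  | zero => simp
  | succ m =>
    rw [smul_eq_mul, nsmul_eq_mul]
    push_cast
    ring

lemma coeff_pow_rec (b : ℕ → ℚ)
    (hrec : ∀ n, b (n+1) = ∑ k ∈ range (n+1), (n.choose k : ℚ) * b k) (m n : ℕ) :
    PowerSeries.coeff (n+1) ((egf b)^m) * (n+1)
      = m * ∑ k ∈ range (n+1),
          PowerSeries.coeff k ((egf b)^m) * (((n-k).factorial : ℚ))⁻¹ := by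
  have h := congrArg (PowerSeries.coeff n) (egf_pow_deriv b hrec m)
  rw [PowerSeries.coeff_derivative, ← map_natCast (PowerSeries.C) m,
    PowerSeries.coeff_C_mul, PowerSeries.coeff_mul,
    Finset.Nat.sum_antidiagonal_eq_sum_range_succ
      (fun i j => PowerSeries.coeff i ((egf b)^m) * PowerSeries.coeff j (egf (fun _ => 1)))]
      at h
  simp only [coeff_egf, mul_one] at h
  exact h

lemma coeff_sub_one_pow_eq_zero (b : ℕ → ℚ) (hb0 : b 0 = 1) {n i : ℕ} (h : n < i) :
    PowerSeries.coeff n ((egf b - 1) ^ i) = 0 := by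
  have hc : PowerSeries.constantCoeff (egf b - 1) = 0 := by
    simp [egf, PowerSeries.constantCoeff_mk, hb0]
  have hdvd : (PowerSeries.X : PowerSeries ℚ) ^ i ∣ (egf b - 1) ^ i :=
    pow_dvd_pow_of_dvd (PowerSeries.X_dvd_iff.mpr hc) i
  exact (PowerSeries.X_pow_dvd_iff.mp hdvd) n h

lemma coeff_pow_binomial (b : ℕ → ℚ) (hb0 : b 0 = 1) (m n : ℕ) :
    (n.factorial : ℚ) * PowerSeries.coeff n ((egf b)^m)
      = ∑ i ∈ range (n+1), (m.descFactorial i : ℚ)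
          * (((n.factorial : ℚ) / (i.factorial : ℚ)) * PowerSeries.coeff n ((egf b - 1) ^ i)) := by
  have hbin : (egf b)^m
      = ∑ i ∈ range (m+1), (egf b - 1)^i * 1^(m-i) * (m.choose i : PowerSeries ℚ) := by
    rw [← add_pow, sub_add_cancel]
  rw [hbin, map_sum, Finset.mul_sum]
  set N := max n m with hN
  have hL : ∀ i ∈ range (N+1) \ range (n+1),
      (m.descFactorial i : ℚ)
        * (((n.factorial : ℚ) / (i.factorial : ℚ)) * PowerSeries.coeff n ((egf b - 1) ^ i))
        = 0 := by
    intro i hi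
    simp only [Finset.mem_sdiff, Finset.mem_range, not_lt] at hi
    rw [coeff_sub_one_pow_eq_zero b hb0 (by omega), mul_zero, mul_zero]
  have hR : ∀ i ∈ range (N+1) \ range (m+1),
      (n.factorial : ℚ) * PowerSeries.coeff n ((egf b - 1)^i * 1^(m-i) * (m.choose i : PowerSeries ℚ))
        = 0 := by
    intro i hi
    simp only [Finset.mem_sdiff, Finset.mem_range, not_lt] at hi
    rw [Nat.choose_eq_zero_of_lt (by omega), Nat.cast_zero, mul_zero, map_zero, mul_zero]
  rw [Finset.sum_subset (Finset.range_subset_range.mpr (by omega : m+1 ≤ N+1))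
      (fun i hi hni => hR i (Finset.mem_sdiff.mpr ⟨hi, hni⟩)),
    Finset.sum_subset (Finset.range_subset_range.mpr (by omega : n+1 ≤ N+1))
      (fun i hi hni => hL i (Finset.mem_sdiff.mpr ⟨hi, hni⟩))]
  refine Finset.sum_congr rfl fun i _ => ?_
  rw [one_pow, mul_one, ← map_natCast (PowerSeries.C) (m.choose i),
    PowerSeries.coeff_mul_C, Nat.descFactorial_eq_factorial_mul_choose]
  have h2 : (i.factorial : ℚ) ≠ 0 := Nat.cast_ne_zero.mpr i.factorial_ne_zero
  push_cast
  field_simp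

/-- The polynomials `p_n(x) = Σ_i (x)_i B_{n,i}(b)` satisfy the recursion
`p_{n+1}(x) = x Σ_k C(n,k) p_k(x)` iff `b` has all falling-factorial moments `1`
(i.e. `b` is the Bell-number sequence); in particular the exponential polynomials
`Φ_n(x) = Σ_k S(n,k) x^k` satisfy `Φ_{n+1}(x) = x Σ_k C(n,k) Φ_k(x)`. -/
theorem bell_polynomial_recursion (b : ℕ → ℚ) (hb0 : b 0 = 1)
    (p : ℕ → Polynomial ℚ)
    (hp : ∀ n, p n = ∑ i ∈ Finset.range (n + 1),
      descPochhammer ℚ i * Polynomial.C (bellPartial b n i))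
    (Φ : ℕ → Polynomial ℚ)
    (hΦ : ∀ n, Φ n = ∑ k ∈ Finset.range (n + 1),
      Polynomial.C (stirling2 n k : ℚ) * Polynomial.X ^ k) :
    ((∀ n : ℕ, p (n + 1) =
        Polynomial.X * ∑ k ∈ Finset.range (n + 1), Polynomial.C (n.choose k : ℚ) * p k) ↔
      (∀ n : ℕ, ∑ k ∈ Finset.range (n + 1), stirling1 n k * b k = 1)) ∧
    (∀ n : ℕ, Φ (n + 1) =
        Polynomial.X * ∑ k ∈ Finset.range (n + 1), Polynomial.C (n.choose k : ℚ) * Φ k) := by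
  -- the evaluation lemma
  have heval : ∀ n m : ℕ, (p n).eval (m : ℚ)
      = (n.factorial : ℚ) * PowerSeries.coeff n ((egf b)^m) := by
    intro n m
    rw [hp n, eval_finset_sum, coeff_pow_binomial b hb0 m n]
    refine Finset.sum_congr rfl fun i _ => ?_
    rw [eval_mul, eval_C, descPochhammer_eval_eq_descFactorial, bellPartial, smul_eq_mul]
  -- cast Bell numbers to ℚ
  set bQ : ℕ → ℚ := fun n => (bellNum n : ℚ) with hbQ
  have hbQ0 : bQ 0 = 1 := by simp [hbQ, bellNum, stirling2]
  have hbQrec : ∀ n, bQ (n+1) = ∑ k ∈ range (n+1), (n.choose k : ℚ) * bQ k := by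
    intro n
    simp only [hbQ, bellNum_rec n]
    push_cast
    rfl
  have hbQmom : ∀ n, ∑ k ∈ range (n+1), stirling1 n k * bQ k = 1 := by
    intro n
    rw [← Lb_desc_eq, Lb_descPochhammer bQ hbQ0 hbQrec]
  constructor
  · constructor
    · -- polynomial recursion → moments
      intro hrecP n
      -- first: b satisfies Bell recursion, by evaluating at 1
      have hbrec : ∀ n, b (n+1) = ∑ k ∈ range (n+1), (n.choose k : ℚ) * b k := by
        intro n
        have hb : ∀ j : ℕ, (p j).eval ((1:ℕ) : ℚ) = b j := by
          intro j
          rw [heval j 1, pow_one, coeff_egf]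
          have : (j.factorial : ℚ) ≠ 0 := Nat.cast_ne_zero.mpr j.factorial_ne_zero
          field_simp
        have := congrArg (Polynomial.eval ((1:ℕ) : ℚ)) (hrecP n)
        rw [hb (n+1), eval_mul, eval_X, eval_finset_sum] at this
        simp only [eval_mul, eval_C, hb] at this
        rw [this, Nat.cast_one, one_mul]
      rw [← Lb_desc_eq, Lb_descPochhammer b hb0 hbrec]
    · -- moments → polynomial recursion
      intro hmom n
      have hbeq : b = bQ := moments_unique b bQ hmom hbQmom
      have hbrec : ∀ n, b (n+1) = ∑ k ∈ range (n+1), (n.choose k : ℚ) * b k := by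
        rw [hbeq]; exact hbQrec
      apply Polynomial.eq_of_infinite_eval_eq
      apply Set.Infinite.mono (s := Set.range (Nat.cast : ℕ → ℚ))
      · rintro x ⟨m, rfl⟩
        simp only [Set.mem_setOf_eq]
        rw [heval (n+1) m, eval_mul, eval_X, eval_finset_sum]
        simp only [eval_mul, eval_C]
        have : ∀ k ∈ range (n+1), (n.choose k : ℚ) * (p k).eval (m : ℚ)
            = (n.choose k : ℚ) * ((k.factorial : ℚ) * PowerSeries.coeff k ((egf b)^m)) := by
          intro k _; rw [heval k m]
        rw [Finset.sum_congr rfl this]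
        have hfact : ((n+1).factorial : ℚ) = (n.factorial : ℚ) * ((n:ℚ)+1) := by
          rw [Nat.factorial_succ]; push_cast; ring
        rw [hfact, mul_assoc, mul_comm ((n:ℚ)+1)]
        have hkey := coeff_pow_rec b hbrec m n
        push_cast at hkey
        rw [hkey, Finset.mul_sum, Finset.mul_sum, Finset.mul_sum]
        refine Finset.sum_congr rfl fun k hk => ?_
        rw [Finset.mem_range] at hk
        rw [Nat.cast_choose ℚ (by omega : k ≤ n)]
        have h1 : (n.factorial : ℚ) ≠ 0 := Nat.cast_ne_zero.mpr n.factorial_ne_zero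
        have h2 : (k.factorial : ℚ) ≠ 0 := Nat.cast_ne_zero.mpr k.factorial_ne_zero
        have h3 : ((n-k).factorial : ℚ) ≠ 0 := Nat.cast_ne_zero.mpr (n-k).factorial_ne_zero
        field_simp
      · exact Set.infinite_range_of_injective Nat.cast_injective
  · -- the Φ recursion
    intro n
    rw [hΦ (n+1)]
    have : ∀ k ∈ range (n+1), Polynomial.C ((n.choose k : ℚ)) * Φ k
        = Polynomial.C ((n.choose k : ℚ))
          * ∑ j ∈ range (k+1), Polynomial.C (stirling2 k j : ℚ) * X^j := by
      intro k _; rw [hΦ k]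
    rw [Finset.sum_congr rfl this, ← phi_rec n]
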